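/- Let σ : [0, L] → ℝ² be a closed convex curve parametrized by arc length, and suppose the turning angle function θ(s) (the angle σ'(s) makes with the x-axis) satisfies θ'(s) ≥ κ > 0 for almost every s. Then for any subarc of σ of length ℓ₀ with endpoints p and q, the chord length satisfies |p - q| ≤ (2/κ) sin(κℓ₀/2). -/

import Mathlib

open Real Filter MeasureTheory Set
open scoped Topology

open intervalIntegral

lemma monotone_expand {f : ℝ → ℝ} (hf : Monotone f) {κ s t : ℝ} (hκ : 0 < κ) (hst : s ≤ t)
    (h : ∀ᵐ x, x ∈ Set.Ioo s t → κ ≤ deriv f x) :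
    κ * (t - s) ≤ f t - f s := by
  rcases eq_or_lt_of_le hst with rfl | hst'
  · simp
  have key : ∀ u v : ℝ, s ≤ u → u ≤ v → v ≤ t →
      κ * (v - u) ≤ Function.rightLim f v - Function.rightLim f u := by
    intro u v hsu huv hvt
    set μ := hf.stieltjesFunction.measure
    have hae : ∀ᵐ x, x ∈ Set.Ioo u v → ENNReal.ofReal κ ≤ μ.rnDeriv volume x := by
      filter_upwards [h, hf.ae_hasDerivAt] with x hx hx' hmem
      have hmem' : x ∈ Set.Ioo s t := ⟨lt_of_le_of_lt hsu hmem.1, lt_of_lt_of_le hmem.2 hvt⟩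
      have hd : deriv f x = (μ.rnDeriv volume x).toReal := hx'.deriv
      have hκx : κ ≤ (μ.rnDeriv volume x).toReal := hd ▸ hx hmem'
      rcases eq_or_ne (μ.rnDeriv volume x) ⊤ with htop | htop
      · simp [htop]
      · exact (ENNReal.ofReal_le_iff_le_toReal htop).2 hκx
    have h1 : ENNReal.ofReal κ * volume (Set.Ioo u v) ≤ μ (Set.Ioo u v) := by
      calc ENNReal.ofReal κ * volume (Set.Ioo u v)
          = ∫⁻ _ in Set.Ioo u v, ENNReal.ofReal κ ∂volume := by
            rw [MeasureTheory.setLIntegral_const]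
        _ ≤ ∫⁻ x in Set.Ioo u v, μ.rnDeriv volume x ∂volume := by
            refine lintegral_mono_ae ?_
            exact (ae_restrict_iff' measurableSet_Ioo).2 hae
        _ ≤ μ (Set.Ioo u v) := Measure.setLIntegral_rnDeriv_le _
    have h2 : μ (Set.Ioo u v) ≤ μ (Set.Ioc u v) := measure_mono Set.Ioo_subset_Ioc_self
    have h3 : μ (Set.Ioc u v) = ENNReal.ofReal (Function.rightLim f v - Function.rightLim f u) := by
      rw [hf.stieltjesFunction.measure_Ioc]
      rw [hf.stieltjesFunction_eq, hf.stieltjesFunction_eq]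
    rw [h3] at h2
    have h4 : ENNReal.ofReal κ * volume (Set.Ioo u v)
        = ENNReal.ofReal (κ * (v - u)) := by
      rw [Real.volume_Ioo, ENNReal.ofReal_mul hκ.le]
    rw [h4] at h1
    have h5 := h1.trans h2
    have h6 : (0:ℝ) ≤ Function.rightLim f v - Function.rightLim f u :=
      sub_nonneg.2 (hf.rightLim huv)
    exact (ENNReal.ofReal_le_ofReal_iff h6).1 h5
  by_contra hcon
  push_neg at hcon
  have hft : 0 ≤ f t - f s := sub_nonneg.2 (hf hst)
  set t' : ℝ := max s (min t (s + (f t - f s) / κ + (t - (s + (f t - f s) / κ))/2)) with ht'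
  have hlt : s + (f t - f s)/κ < t := by
    have : (f t - f s)/κ < t - s := (div_lt_iff₀ hκ).2 (by linarith)
    linarith
  have hst1 : s < t' := by
    have : s < min t (s + (f t - f s) / κ + (t - (s + (f t - f s) / κ))/2) := by
      apply lt_min hst'
      have h0 : 0 ≤ (f t - f s)/κ := div_nonneg hft hκ.le
      nlinarith
    simp [ht', this.le, max_eq_right, this]
  have htt : t' < t := by
    apply max_lt hst'
    apply min_lt_iff.2; right; linarith
  have hkey := key s t' le_rfl hst1.le htt.le
  have hA : Function.rightLim f t' ≤ f t := hf.rightLim_le htt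
  have hB : f s ≤ Function.rightLim f s := hf.le_rightLim le_rfl
  have hC : s + (f t - f s)/κ < t' := by
    apply lt_max_iff.2; right
    apply lt_min_iff.2
    constructor
    · exact hlt
    · linarith
  have : κ * (t' - s) ≤ f t - f s := by linarith
  have : (f t - f s)/κ < t' - s := by linarith
  have := (div_lt_iff₀ hκ).1 this
  nlinarith

lemma cross_le {f : ℝ → ℝ} {κ α β : ℝ} (φ : ℝ) (hκ : 0 < κ) (hαβ : α ≤ β)
    (hexp : ∀ s t : ℝ, s ∈ Set.Icc α β → t ∈ Set.Icc α β → s ≤ t → κ * (t - s) ≤ f t - f s) :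
    ∃ c : ℝ, (∀ s ∈ Set.Icc α β, κ * |s - c| ≤ |f s - φ|) ∧ f α - φ ≤ κ * (α - c) := by
  have hmono : ∀ s t : ℝ, s ∈ Set.Icc α β → t ∈ Set.Icc α β → s ≤ t → f s ≤ f t := by
    intro s t hs ht hst
    have := hexp s t hs ht hst
    nlinarith
  by_cases hfa : φ ≤ f α
  · refine ⟨α - (f α - φ) / κ, ?_, by field_simp; linarith⟩
    intro s hs
    have h1 : φ ≤ f s := hfa.trans (hmono α s ⟨le_rfl, hαβ⟩ hs hs.1)
    have h2 : κ * (s - α) ≤ f s - f α := hexp α s ⟨le_rfl, hαβ⟩ hs hs.1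
    have h3 : (0:ℝ) ≤ (f α - φ) / κ := div_nonneg (by linarith) hκ.le
    have h4 : s - (α - (f α - φ) / κ) = (s - α) + (f α - φ)/κ := by ring
    rw [abs_of_nonneg (by linarith [hs.1]), abs_of_nonneg (by linarith), h4]
    have : κ * ((f α - φ)/κ) = f α - φ := by field_simp
    nlinarith [hs.1]
  · push_neg at hfa
    set S := {s : ℝ | s ∈ Set.Icc α β ∧ f s < φ} with hS
    have hne : S.Nonempty := ⟨α, ⟨le_rfl, hαβ⟩, hfa⟩
    have hbdd : BddAbove S := ⟨β, fun x hx => hx.1.2⟩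
    set c := sSup S with hc
    have hcα : α ≤ c := le_csSup hbdd ⟨⟨le_rfl, hαβ⟩, hfa⟩
    have hcβ : c ≤ β := csSup_le hne fun x hx => hx.1.2
    have main : ∀ s ∈ Set.Icc α β, κ * |s - c| ≤ |f s - φ| := by
      intro s hs
      rcases lt_trichotomy s c with hsc | rfl | hsc
      · -- s < c : f s < φ and κ (c - s) ≤ φ - f s
        have hfs : f s < φ := by
          obtain ⟨t, htS, hst⟩ := exists_lt_of_lt_csSup hne hsc
          exact lt_of_le_of_lt (hmono s t hs htS.1 hst.le) htS.2
        have hub : c ≤ s + (φ - f s) / κ := by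
          apply csSup_le hne
          intro t htS
          rcases le_or_gt t s with h | h
          · have : (0:ℝ) ≤ (φ - f s)/κ := div_nonneg (by linarith) hκ.le
            linarith
          · have := hexp s t hs htS.1 h.le
            have h2 : κ * (t - s) ≤ φ - f s := by linarith [htS.2]
            rw [← le_div_iff₀' hκ] at h2
            linarith
        rw [abs_of_nonpos (by linarith), abs_of_nonpos (by linarith)]
        have : κ * (c - s) ≤ κ * ((φ - f s)/κ) := by
          apply mul_le_mul_of_nonneg_left _ hκ.le; linarith
        have h5 : κ * ((φ - f s)/κ) = φ - f s := by field_simp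
        nlinarith
      · simp [abs_nonneg]
      · -- c < s : φ ≤ f s and κ (s - c) ≤ f s - φ
        have hfs : φ ≤ f s := by
          by_contra hlt
          push_neg at hlt
          exact absurd (le_csSup hbdd ⟨hs, hlt⟩) (not_le.2 hsc)
        have hkey : κ * (s - c) ≤ f s - φ := by
          by_contra hcon
          push_neg at hcon
          set t₀ := s - ((f s - φ)/κ + (s - c - (f s - φ)/κ)/2) with ht₀
          have h0 : (0:ℝ) ≤ (f s - φ)/κ := div_nonneg (by linarith) hκ.le
          have hd : (f s - φ)/κ < s - c := (div_lt_iff₀ hκ).2 (by nlinarith)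
          have hct : c < t₀ := by
            rw [ht₀]; nlinarith
          have hts : t₀ ≤ s := by rw [ht₀]; nlinarith
          have ht₀mem : t₀ ∈ Set.Icc α β := ⟨hcα.trans hct.le, hts.trans hs.2⟩
          have hft₀ : φ ≤ f t₀ := by
            by_contra hlt
            push_neg at hlt
            exact absurd (le_csSup hbdd ⟨ht₀mem, hlt⟩) (not_le.2 hct)
          have := hexp t₀ s ht₀mem hs hts
          have hst0 : (f s - φ)/κ < s - t₀ := by rw [ht₀]; nlinarith
          have := (div_lt_iff₀ hκ).1 hst0
          nlinarith
        rw [abs_of_nonneg (by linarith), abs_of_nonneg (by linarith)]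
        exact hkey
    refine ⟨c, main, ?_⟩
    have := main α ⟨le_rfl, hαβ⟩
    rw [abs_of_nonpos (by linarith), abs_of_nonpos (by linarith)] at this
    linarith

lemma cross_ge {f : ℝ → ℝ} {κ α β : ℝ} (φ : ℝ) (hκ : 0 < κ) (hαβ : α ≤ β)
    (hexp : ∀ s t : ℝ, s ∈ Set.Icc α β → t ∈ Set.Icc α β → s ≤ t → κ * (t - s) ≤ f t - f s) :
    ∃ c : ℝ, (∀ s ∈ Set.Icc α β, κ * |s - c| ≤ |f s - φ|) ∧ κ * (β - c) ≤ f β - φ := by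
  obtain ⟨c', h1, h2⟩ := cross_le (f := fun u => -f (-u)) (κ := κ) (α := -β) (β := -α) (-φ) hκ
    (by linarith) (by
      intro s t hs ht hst
      have := hexp (-t) (-s) ⟨by linarith [ht.2], by linarith [ht.1]⟩
        ⟨by linarith [hs.2], by linarith [hs.1]⟩ (by linarith)
      show κ * (t - s) ≤ -f (-t) - -f (-s)
      linarith)
  have e0 : κ * (β - -c') = -(κ * (-β - c')) := by ring
  refine ⟨-c', ?_, by simp only [neg_neg] at h2; linarith⟩
  intro s hs
  have hmem : -s ∈ Set.Icc (-β) (-α) := ⟨by linarith [hs.2], by linarith [hs.1]⟩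
  have h3 := h1 (-s) hmem
  have e1 : |(-s) - c'| = |s - -c'| := by rw [← abs_neg]; congr 1; ring
  have e2 : |-f (-(-s)) - -φ| = |f s - φ| := by rw [neg_neg, ← abs_neg]; congr 1; ring
  rw [e1, e2] at h3
  exact h3

noncomputable def Wf (r : ℝ) : ℝ → ℝ := fun x => ∫ t in (0:ℝ)..x, Real.cos (max (-r) (min r t))

lemma Gcont (r : ℝ) : Continuous (fun t : ℝ => Real.cos (max (-r) (min r t))) :=
  Real.continuous_cos.comp (continuous_const.max (continuous_const.min continuous_id))

lemma Gge (r : ℝ) (hr0 : 0 ≤ r) (hrπ : r ≤ Real.pi) (t : ℝ) :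
    Real.cos r ≤ Real.cos (max (-r) (min r t)) := by
  have h1 : |max (-r) (min r t)| ≤ r := by
    rw [abs_le]; constructor
    · exact le_max_left _ _
    · exact max_le (by linarith) ((min_le_left _ _))
  rw [← Real.cos_abs (max _ _)]
  exact Real.cos_le_cos_of_nonneg_of_le_pi (abs_nonneg _) hrπ h1

lemma Wd (r : ℝ) (x : ℝ) : HasDerivAt (Wf r) (Real.cos (max (-r) (min r x))) x := by
  refine intervalIntegral.integral_hasDerivAt_right ((Gcont r).intervalIntegrable _ _)
    ((Gcont r).stronglyMeasurableAtFilter _ _) (Gcont r).continuousAt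

lemma W2 (r : ℝ) (hr0 : 0 ≤ r) (hrπ : r ≤ Real.pi) {y x : ℝ} (hyx : y ≤ x) :
    (x - y) * Real.cos r ≤ Wf r x - Wf r y := by
  have hmono : Monotone (fun x => Wf r x - x * Real.cos r) := by
    apply monotone_of_deriv_nonneg
    · intro z
      exact ((Wd r z).sub (hasDerivAt_mul_const _)).differentiableAt
    · intro z
      have hd : HasDerivAt (fun x => Wf r x - x * Real.cos r)
          (Real.cos (max (-r) (min r z)) - Real.cos r) z := (Wd r z).sub (hasDerivAt_mul_const _)
      rw [hd.deriv]
      have := Gge r hr0 hrπ z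
      linarith
  have := hmono hyx
  simp only at this
  linarith

lemma Wr_eq (r : ℝ) (hr0 : 0 ≤ r) : Wf r r = Real.sin r := by
  have : Wf r r = ∫ t in (0:ℝ)..r, Real.cos t := by
    apply intervalIntegral.integral_congr
    intro t ht
    rw [Set.uIcc_of_le hr0] at ht
    have h1 : min r t = t := min_eq_right ht.2
    have h2 : max (-r) t = t := max_eq_right (by linarith [ht.1])
    simp [h1, h2]
  rw [this, integral_cos]; simp

lemma Wnr_eq (r : ℝ) (hr0 : 0 ≤ r) : Wf r (-r) = -Real.sin r := by
  have : Wf r (-r) = ∫ t in (0:ℝ)..(-r), Real.cos t := by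
    apply intervalIntegral.integral_congr
    intro t ht
    rw [Set.uIcc_of_ge (by linarith : -r ≤ 0)] at ht
    have h1 : min r t = t := min_eq_right (by linarith [ht.2])
    have h2 : max (-r) t = t := max_eq_right ht.1
    simp [h1, h2]
  rw [this, integral_cos]; simp

lemma W3 (r : ℝ) (hr0 : 0 ≤ r) (hrπ : r ≤ Real.pi) (x : ℝ) :
    Wf r x ≤ (x - r) * Real.cos r + Real.sin r := by
  rcases le_or_gt x r with h | h
  · have := W2 r hr0 hrπ h
    rw [Wr_eq r hr0] at this
    linarith
  · have heq : Wf r x - Wf r r = (x - r) * Real.cos r := by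
      have hadj := intervalIntegral.integral_add_adjacent_intervals (a := (0:ℝ)) (b := r)
        (c := x) (μ := volume) ((Gcont r).intervalIntegrable _ _) ((Gcont r).intervalIntegrable _ _)
      have : Wf r x - Wf r r = ∫ t in r..x, Real.cos (max (-r) (min r t)) := by
        rw [Wf, Wf]; linarith
      rw [this]
      have : ∫ t in r..x, Real.cos (max (-r) (min r t)) = ∫ _t in r..x, Real.cos r := by
        apply intervalIntegral.integral_congr
        intro t ht
        rw [Set.uIcc_of_le h.le] at ht
        have h1 : min r t = r := min_eq_left ht.1
        have h2 : max (-r) r = r := max_eq_right (by linarith)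
        show Real.cos (max (-r) (min r t)) = Real.cos r
        rw [h1, h2]
      rw [this, intervalIntegral.integral_const, smul_eq_mul]
    rw [Wr_eq r hr0] at heq
    linarith
lemma W4 (r : ℝ) (hr0 : 0 ≤ r) (hrπ : r ≤ Real.pi) (x : ℝ) :
    (x + r) * Real.cos r - Real.sin r ≤ Wf r x := by
  rcases le_or_gt (-r) x with h | h
  · have := W2 r hr0 hrπ h
    rw [Wnr_eq r hr0] at this
    linarith
  · have heq : Wf r (-r) - Wf r x = (-r - x) * Real.cos r := by
      have hadj := intervalIntegral.integral_add_adjacent_intervals (a := (0:ℝ)) (b := x)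
        (c := -r) (μ := volume) ((Gcont r).intervalIntegrable _ _) ((Gcont r).intervalIntegrable _ _)
      have e : Wf r (-r) - Wf r x = ∫ t in x..(-r), Real.cos (max (-r) (min r t)) := by
        rw [Wf, Wf]; linarith
      rw [e]
      have e2 : ∫ t in x..(-r), Real.cos (max (-r) (min r t)) = ∫ _t in x..(-r), Real.cos r := by
        apply intervalIntegral.integral_congr
        intro t ht
        rw [Set.uIcc_of_le h.le] at ht
        have h1 : min r t = t := min_eq_right (by linarith [ht.2])
        have h2 : max (-r) t = -r := max_eq_left ht.2
        show Real.cos (max (-r) (min r t)) = Real.cos r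
        rw [h1, h2, Real.cos_neg]
      rw [e2, intervalIntegral.integral_const, smul_eq_mul]
    rw [Wnr_eq r hr0] at heq
    linarith

lemma cos_window {r x : ℝ} (hr0 : 0 < r) (hrπ : r ≤ Real.pi) (h1 : -(2 * Real.pi - r) ≤ x)
    (h2 : x ≤ 2 * Real.pi - r) (h : Real.cos r < Real.cos x) : |x| < r := by
  by_contra hcon
  push_neg at hcon
  have habs : |x| ≤ 2 * Real.pi - r := abs_le.2 ⟨h1, h2⟩
  have : Real.cos x ≤ Real.cos r := by
    rw [← Real.cos_abs x]
    rcases le_or_gt |x| Real.pi with hxπ | hxπ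
    · exact Real.cos_le_cos_of_nonneg_of_le_pi hr0.le hxπ hcon
    · rw [← Real.cos_two_pi_sub]
      exact Real.cos_le_cos_of_nonneg_of_le_pi hr0.le (by linarith) (by linarith)
  linarith

lemma key_estimate {f : ℝ → ℝ} {κ a b : ℝ} (hκ : 0 < κ) (hab : a ≤ b) (hmeas : Measurable f)
    (hexp : ∀ s t : ℝ, s ∈ Set.Icc a b → t ∈ Set.Icc a b → s ≤ t → κ * (t - s) ≤ f t - f s)
    (hwind : f b ≤ f a + 2 * Real.pi) (hlen : κ * (b - a) ≤ 2 * Real.pi) (φ : ℝ) :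
    ∫ s in a..b, Real.cos (f s - φ) ≤ 2 / κ * Real.sin (κ * (b - a) / 2) := by
  rcases eq_or_lt_of_le hab with rfl | hab'
  · simp
  set r := κ * (b - a) / 2 with hr
  have hr0 : 0 < r := by
    rw [hr]; nlinarith [mul_pos hκ (sub_pos.2 hab')]
  have hrπ : r ≤ Real.pi := by
    rw [hr]; linarith [Real.pi_pos]
  -- choose representative φ'
  set k : ℤ := ⌈(φ - f a + r) / (2 * Real.pi)⌉ - 1 with hk
  set φ' : ℝ := φ - 2 * Real.pi * k with hφ'
  have hπ : (0:ℝ) < 2 * Real.pi := by linarith [Real.pi_pos]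
  have hφ'1 : f a < φ' + r := by
    have h1 : (k:ℝ) < (φ - f a + r) / (2 * Real.pi) := by
      rw [hk]; push_cast
      linarith [Int.ceil_lt_add_one ((φ - f a + r) / (2 * Real.pi))]
    rw [lt_div_iff₀ hπ] at h1
    rw [hφ']; linarith
  have hφ'2 : φ' + r ≤ f a + 2 * Real.pi := by
    have h1 : (φ - f a + r) / (2 * Real.pi) - 1 ≤ (k:ℝ) := by
      rw [hk]; push_cast
      linarith [Int.le_ceil ((φ - f a + r) / (2 * Real.pi))]
    rw [sub_le_iff_le_add, div_le_iff₀ hπ] at h1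
    rw [hφ']; linarith
  have hcos1 : ∀ s : ℝ, Real.cos (f s - φ) = Real.cos (f s - φ') := by
    intro s
    have : f s - φ' = f s - φ + k * (2 * Real.pi) := by rw [hφ']; push_cast; ring
    rw [this, Real.cos_add_int_mul_two_pi]
  set φ'' : ℝ := φ' + 2 * Real.pi with hφ''
  have hcos2 : ∀ s : ℝ, Real.cos (f s - φ) = Real.cos (f s - φ'') := by
    intro s
    have : f s - φ'' = f s - φ + ((k - 1 : ℤ) : ℝ) * (2 * Real.pi) := by
      rw [hφ'', hφ']; push_cast; ring
    rw [this, Real.cos_add_int_mul_two_pi]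
  -- monotonicity of f on [a,b]
  have hfmono : ∀ s t : ℝ, s ∈ Set.Icc a b → t ∈ Set.Icc a b → s ≤ t → f s ≤ f t := by
    intro s t hs ht hst
    have := hexp s t hs ht hst
    nlinarith
  -- the split point m
  set S₂ : Set ℝ := insert b {s : ℝ | s ∈ Set.Icc a b ∧ φ'' - r < f s} with hS₂
  have hS₂ne : S₂.Nonempty := ⟨b, Set.mem_insert _ _⟩
  have hS₂bdd : BddBelow S₂ := by
    refine ⟨a, ?_⟩
    rintro x (rfl | hx)
    · exact hab
    · exact hx.1.1
  set m : ℝ := sInf S₂ with hm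
  have hma : a ≤ m := by
    apply le_csInf hS₂ne
    rintro x (rfl | hx)
    · exact hab
    · exact hx.1.1
  have hmb : m ≤ b := csInf_le hS₂bdd (Set.mem_insert _ _)
  have hbelow : ∀ s : ℝ, a ≤ s → s < m → f s ≤ φ'' - r := by
    intro s hsa hsm
    by_contra hcon
    push_neg at hcon
    have : s ∈ S₂ := Set.mem_insert_iff.2 (Or.inr ⟨⟨hsa, hsm.le.trans hmb⟩, hcon⟩)
    exact absurd (csInf_le hS₂bdd this) (not_le.2 hsm)
  have habove : ∀ s : ℝ, m < s → s ≤ b → φ'' - r < f s := by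
    intro s hms hsb
    obtain ⟨t, htS, hts⟩ := exists_lt_of_csInf_lt hS₂ne hms
    rcases htS with rfl | htS
    · linarith
    · exact lt_of_lt_of_le htS.2 (hfmono t s htS.1 ⟨hma.trans (le_of_lt hms), hsb⟩ hts.le)
  clear_value r k φ' φ'' S₂ m
  -- crossing points
  obtain ⟨c₁, P₁, hu₁⟩ := cross_le (f := f) (κ := κ) φ' hκ hma
    (fun s t hs ht hst => hexp s t ⟨hs.1, hs.2.trans hmb⟩ ⟨ht.1, ht.2.trans hmb⟩ hst)
  obtain ⟨c₂, P₂, hv₂⟩ := cross_ge (f := f) (κ := κ) φ'' hκ hmb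
    (fun s t hs ht hst => hexp s t ⟨hma.trans hs.1, hs.2⟩ ⟨hma.trans ht.1, ht.2⟩ hst)
  -- pointwise bound on [a, m)
  have hbd1 : ∀ s : ℝ, s ∈ Set.Icc a m → s ≠ m →
      Real.cos (f s - φ) ≤ Real.cos (max (-r) (min r (κ * (s - c₁)))) := by
    intro s hs hsm
    rcases le_or_gt (Real.cos (f s - φ')) (Real.cos r) with hcc | hcc
    · rw [hcos1 s]
      exact hcc.trans (Gge r hr0.le hrπ _)
    · have hsm' : s < m := lt_of_le_of_ne hs.2 hsm
      have hlow : -(2 * Real.pi - r) ≤ f s - φ' := by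
        have := hfmono a s ⟨le_rfl, hab⟩ ⟨hs.1, hs.2.trans hmb⟩ hs.1
        linarith
      have hhigh : f s - φ' ≤ 2 * Real.pi - r := by
        have := hbelow s hs.1 hsm'
        rw [hφ''] at this
        linarith
      have habs : |f s - φ'| < r := cos_window hr0 hrπ hlow hhigh hcc
      have hP := P₁ s hs
      have habs2 : κ * |s - c₁| < r := lt_of_le_of_lt hP habs
      have hclamp : max (-r) (min r (κ * (s - c₁))) = κ * (s - c₁) := by
        have h1 : |κ * (s - c₁)| < r := by
          rw [abs_mul, abs_of_pos hκ]; exact habs2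
        rw [abs_lt] at h1
        rw [min_eq_right h1.2.le, max_eq_right h1.1.le]
      rw [hcos1 s, hclamp, ← Real.cos_abs (f s - φ'), ← Real.cos_abs (κ * (s - c₁))]
      have e : |κ * (s - c₁)| = κ * |s - c₁| := by rw [abs_mul, abs_of_pos hκ]
      rw [e]
      exact Real.cos_le_cos_of_nonneg_of_le_pi (by positivity) (le_trans habs.le hrπ) hP
  -- pointwise bound on (m, b]
  have hbd2 : ∀ s : ℝ, s ∈ Set.Icc m b → s ≠ m →
      Real.cos (f s - φ) ≤ Real.cos (max (-r) (min r (κ * (s - c₂)))) := by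
    intro s hs hsm
    have hms : m < s := lt_of_le_of_ne hs.1 (Ne.symm hsm)
    have hlow : φ'' - r < f s := habove s hms hs.2
    have hhigh : f s < φ'' + r := by
      have := hfmono s b ⟨hma.trans hs.1, hs.2⟩ ⟨hab, le_rfl⟩ hs.2
      rw [hφ'']
      linarith
    have habs : |f s - φ''| < r := abs_lt.2 ⟨by linarith, by linarith⟩
    have hP := P₂ s hs
    have habs2 : κ * |s - c₂| < r := lt_of_le_of_lt hP habs
    have hclamp : max (-r) (min r (κ * (s - c₂))) = κ * (s - c₂) := by
      have h1 : |κ * (s - c₂)| < r := by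
        rw [abs_mul, abs_of_pos hκ]; exact habs2
      rw [abs_lt] at h1
      rw [min_eq_right h1.2.le, max_eq_right h1.1.le]
    rw [hcos2 s, hclamp, ← Real.cos_abs (f s - φ''), ← Real.cos_abs (κ * (s - c₂))]
    have e : |κ * (s - c₂)| = κ * |s - c₂| := by rw [abs_mul, abs_of_pos hκ]
    rw [e]
    exact Real.cos_le_cos_of_nonneg_of_le_pi (by positivity) (le_trans habs.le hrπ) hP
  -- integrability
  have hintf : ∀ u v : ℝ, IntervalIntegrable (fun s => Real.cos (f s - φ)) volume u v := by
    intro u v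
    apply IntervalIntegrable.mono_fun' (g := fun _ => (1:ℝ)) intervalIntegrable_const
    · exact (Real.measurable_cos.comp (hmeas.sub measurable_const)).aestronglyMeasurable
    · filter_upwards with x
      simp [Real.abs_cos_le_one]
  have hG1cont : Continuous fun s : ℝ => Real.cos (max (-r) (min r (κ * (s - c₁)))) := by
    exact (Gcont r).comp ((continuous_const.mul (continuous_id.sub continuous_const)))
  have hG2cont : Continuous fun s : ℝ => Real.cos (max (-r) (min r (κ * (s - c₂)))) := by
    exact (Gcont r).comp ((continuous_const.mul (continuous_id.sub continuous_const)))
  -- a.e. bounds and integral comparisons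
  have haem : ∀ᵐ x : ℝ ∂volume, x ≠ m := by
    rw [MeasureTheory.ae_iff]
    have : {x : ℝ | ¬ x ≠ m} = {m} := by ext x; simp
    rw [this]
    exact Real.volume_singleton
  have hI1 : (∫ s in a..m, Real.cos (f s - φ))
      ≤ ∫ s in a..m, Real.cos (max (-r) (min r (κ * (s - c₁)))) := by
    apply intervalIntegral.integral_mono_ae_restrict hma (hintf a m)
      (hG1cont.intervalIntegrable _ _)
    filter_upwards [ae_restrict_mem measurableSet_Icc, ae_restrict_of_ae haem] with s hs hsm
    exact hbd1 s hs hsm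
  have hI2 : (∫ s in m..b, Real.cos (f s - φ))
      ≤ ∫ s in m..b, Real.cos (max (-r) (min r (κ * (s - c₂)))) := by
    apply intervalIntegral.integral_mono_ae_restrict hmb (hintf m b)
      (hG2cont.intervalIntegrable _ _)
    filter_upwards [ae_restrict_mem measurableSet_Icc, ae_restrict_of_ae haem] with s hs hsm
    exact hbd2 s hs hsm
  -- FTC for the comparison integrals
  have hFTC : ∀ c u v : ℝ, (∫ s in u..v, Real.cos (max (-r) (min r (κ * (s - c)))))
      = κ⁻¹ * Wf r (κ * (v - c)) - κ⁻¹ * Wf r (κ * (u - c)) := by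
    intro c u v
    have hd : ∀ s : ℝ, HasDerivAt (fun z => κ⁻¹ * Wf r (κ * (z - c)))
        (Real.cos (max (-r) (min r (κ * (s - c))))) s := by
      intro s
      have hinner : HasDerivAt (fun z : ℝ => κ * (z - c)) κ s := by
        simpa using ((hasDerivAt_id s).sub_const c).const_mul κ
      have := ((Wd r (κ * (s - c))).comp s hinner).const_mul κ⁻¹
      have e : κ⁻¹ * (Real.cos (max (-r) (min r (κ * (s - c)))) * κ)
          = Real.cos (max (-r) (min r (κ * (s - c)))) := by
        rw [mul_comm (Real.cos _) κ, ← mul_assoc, inv_mul_cancel₀ hκ.ne', one_mul]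
      exact this.congr_deriv e
    rw [intervalIntegral.integral_eq_sub_of_hasDerivAt (fun s _ => hd s)
      (((Gcont r).comp ((continuous_const.mul (continuous_id.sub continuous_const)))).intervalIntegrable _ _)]
  rw [hFTC c₁ a m] at hI1
  rw [hFTC c₂ m b] at hI2
  -- endgame
  have hsplit : (∫ s in a..b, Real.cos (f s - φ))
      = (∫ s in a..m, Real.cos (f s - φ)) + ∫ s in m..b, Real.cos (f s - φ) :=
    (intervalIntegral.integral_add_adjacent_intervals (hintf a m) (hintf m b)).symm
  have hvu : κ * (b - c₂) ≤ κ * (a - c₁) := by linarith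
  have hW2' := W2 r hr0.le hrπ hvu
  have hW3' := W3 r hr0.le hrπ (κ * (m - c₁))
  have hW4' := W4 r hr0.le hrπ (κ * (m - c₂))
  have hsum : κ⁻¹ * Wf r (κ * (m - c₁)) - κ⁻¹ * Wf r (κ * (a - c₁))
      + (κ⁻¹ * Wf r (κ * (b - c₂)) - κ⁻¹ * Wf r (κ * (m - c₂)))
      ≤ 2 / κ * Real.sin r := by
    have h2r : κ * (m - c₁) - κ * (a - c₁) + (κ * (b - c₂) - κ * (m - c₂)) = 2 * r := by
      rw [hr]; ring
    have hκinv : (0:ℝ) < κ⁻¹ := by positivity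
    have hcore : Wf r (κ * (m - c₁)) - Wf r (κ * (a - c₁))
        + (Wf r (κ * (b - c₂)) - Wf r (κ * (m - c₂))) ≤ 2 * Real.sin r := by
      have h2rc : (κ * (m - c₁) - κ * (a - c₁) + (κ * (b - c₂) - κ * (m - c₂)))
          * Real.cos r = 2 * r * Real.cos r := by rw [h2r]
      linarith [hW2', hW3', hW4', h2rc]
    have := mul_le_mul_of_nonneg_left hcore hκinv.le
    calc κ⁻¹ * Wf r (κ * (m - c₁)) - κ⁻¹ * Wf r (κ * (a - c₁))
        + (κ⁻¹ * Wf r (κ * (b - c₂)) - κ⁻¹ * Wf r (κ * (m - c₂)))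
        = κ⁻¹ * (Wf r (κ * (m - c₁)) - Wf r (κ * (a - c₁))
          + (Wf r (κ * (b - c₂)) - Wf r (κ * (m - c₂)))) := by ring
      _ ≤ κ⁻¹ * (2 * Real.sin r) := this
      _ = 2 / κ * Real.sin r := by ring
  rw [hsplit]
  linarith [hI1, hI2, hsum]

/-- **Global arc/chord comparison for convex plane curves with curvature `≥ κ`**
(Theorem 2.8 of the paper): if `σ : [0, L] → ℝ²` is a closed convex curve parametrized
by arc length whose turning angle `θ` satisfies `θ'(s) ≥ κ > 0` a.e., then every subarc
with endpoints `σ a`, `σ b` (of length `ℓ₀ = b - a`) has chord length at most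
`(2/κ)·sin(κ ℓ₀ / 2)`. -/
theorem global_arc_chord_convex_plane
    (L κ : ℝ) (hL : 0 < L) (hκ : 0 < κ)
    (σ : ℝ → ℝ × ℝ) (θ : ℝ → ℝ)
    (hmono : MonotoneOn θ (Set.Icc 0 L))
    (hderiv : ∀ s ∈ Set.Icc (0:ℝ) L, HasDerivAt σ (Real.cos (θ s), Real.sin (θ s)) s)
    (hclosed : σ 0 = σ L)
    (hturn : θ L = θ 0 + 2 * Real.pi)
    (hcurv : ∀ᵐ s ∂(volume.restrict (Set.Icc (0:ℝ) L)), κ ≤ deriv θ s)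
    (a b : ℝ) (ha : 0 ≤ a) (hab : a ≤ b) (hb : b ≤ L) :
    dist (σ a) (σ b) ≤ 2 / κ * Real.sin (κ * (b - a) / 2) := by
  -- the clamped turning function
  set ψ : ℝ → ℝ := fun s => θ (max 0 (min L s)) with hψ
  have hclamp_mem : ∀ s : ℝ, max 0 (min L s) ∈ Set.Icc 0 L :=
    fun s => ⟨le_max_left _ _, max_le hL.le (min_le_left _ _)⟩
  have hψmono : Monotone ψ := by
    intro s t hst
    exact hmono (hclamp_mem s) (hclamp_mem t)
      (max_le_max le_rfl (min_le_min le_rfl hst))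
  have hψeq : ∀ s ∈ Set.Icc (0:ℝ) L, ψ s = θ s := by
    intro s hs
    rw [hψ]
    simp only
    rw [min_eq_right hs.2, max_eq_right hs.1]
  -- expansion property of θ on [0, L]
  have hexp : ∀ s t : ℝ, s ∈ Set.Icc 0 L → t ∈ Set.Icc 0 L → s ≤ t →
      κ * (t - s) ≤ θ t - θ s := by
    intro s t hs ht hst
    have hae : ∀ᵐ x, x ∈ Set.Ioo s t → κ ≤ deriv ψ x := by
      filter_upwards [ae_imp_of_ae_restrict hcurv] with x hx hmem
      have hx0L : x ∈ Set.Ioo 0 L :=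
        ⟨lt_of_le_of_lt hs.1 hmem.1, lt_of_lt_of_le hmem.2 ht.2⟩
      have heq : deriv ψ x = deriv θ x := by
        apply Filter.EventuallyEq.deriv_eq
        filter_upwards [isOpen_Ioo.mem_nhds hx0L] with y hy
        exact hψeq y ⟨hy.1.le, hy.2.le⟩
      rw [heq]
      exact hx ⟨hx0L.1.le, hx0L.2.le⟩
    have := monotone_expand hψmono hκ hst hae
    rwa [hψeq s hs, hψeq t ht] at this
  -- hypotheses of the key estimate for ψ on [a, b]
  have hsub : Set.Icc a b ⊆ Set.Icc (0:ℝ) L := Set.Icc_subset_Icc ha hb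
  have habL : a ∈ Set.Icc (0:ℝ) L := ⟨ha, hab.trans hb⟩
  have hbbL : b ∈ Set.Icc (0:ℝ) L := ⟨ha.trans hab, hb⟩
  have hexpψ : ∀ s t : ℝ, s ∈ Set.Icc a b → t ∈ Set.Icc a b → s ≤ t →
      κ * (t - s) ≤ ψ t - ψ s := by
    intro s t hs ht hst
    rw [hψeq s (hsub hs), hψeq t (hsub ht)]
    exact hexp s t (hsub hs) (hsub ht) hst
  have hwind : ψ b ≤ ψ a + 2 * Real.pi := by
    rw [hψeq a habL, hψeq b hbbL]
    have h1 : θ b ≤ θ L := hmono hbbL ⟨hL.le, le_rfl⟩ hb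
    have h2 : θ 0 ≤ θ a := hmono ⟨le_rfl, hL.le⟩ habL ha
    linarith [hturn]
  have hlen : κ * (b - a) ≤ 2 * Real.pi := by
    have h1 := hexp 0 L ⟨le_rfl, hL.le⟩ ⟨hL.le, le_rfl⟩ hL.le
    rw [hturn] at h1
    have h2 : κ * (b - a) ≤ κ * (L - 0) := by
      apply mul_le_mul_of_nonneg_left _ hκ.le
      linarith
    linarith
  have hKey := fun φ => key_estimate hκ hab hψmono.measurable hexpψ hwind hlen φ
  -- integrability of cos/sin of ψ
  have hint : ∀ g : ℝ → ℝ, Measurable g → (∀ x, |g x| ≤ 1) →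
      IntervalIntegrable g volume a b := by
    intro g hg hgb
    apply IntervalIntegrable.mono_fun' (g := fun _ => (1:ℝ)) intervalIntegrable_const
      hg.aestronglyMeasurable
    filter_upwards with x
    exact hgb x
  -- FTC for the two coordinates
  have hFTC1 : (∫ s in a..b, Real.cos (ψ s)) = (σ b).1 - (σ a).1 := by
    apply intervalIntegral.integral_eq_sub_of_hasDerivAt (f := fun s => (σ s).1)
    · intro s hs
      rw [Set.uIcc_of_le hab] at hs
      have hsL := hsub hs
      have h := (ContinuousLinearMap.fst ℝ ℝ ℝ).hasFDerivAt.comp_hasDerivAt s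
        (hderiv s hsL)
      simp only [ContinuousLinearMap.coe_fst'] at h
      have : Real.cos (ψ s) = Real.cos (θ s) := by rw [hψeq s hsL]
      rw [this]
      exact h
    · exact hint _ (Real.measurable_cos.comp hψmono.measurable)
        (fun x => Real.abs_cos_le_one _)
  have hFTC2 : (∫ s in a..b, Real.sin (ψ s)) = (σ b).2 - (σ a).2 := by
    apply intervalIntegral.integral_eq_sub_of_hasDerivAt (f := fun s => (σ s).2)
    · intro s hs
      rw [Set.uIcc_of_le hab] at hs
      have hsL := hsub hs
      have h := (ContinuousLinearMap.snd ℝ ℝ ℝ).hasFDerivAt.comp_hasDerivAt s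
        (hderiv s hsL)
      simp only [ContinuousLinearMap.coe_snd'] at h
      have : Real.sin (ψ s) = Real.sin (θ s) := by rw [hψeq s hsL]
      rw [this]
      exact h
    · exact hint _ (Real.measurable_sin.comp hψmono.measurable)
        (fun x => Real.abs_sin_le_one _)
  -- bounds on the two coordinates
  set R := 2 / κ * Real.sin (κ * (b - a) / 2) with hR
  have hb1 : |(σ b).1 - (σ a).1| ≤ R := by
    rw [← hFTC1, abs_le]
    constructor
    · have h := hKey Real.pi
      have he : ∀ s, Real.cos (ψ s - Real.pi) = -Real.cos (ψ s) :=
        fun s => Real.cos_sub_pi _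
      rw [intervalIntegral.integral_congr (g := fun s => -Real.cos (ψ s))
        (fun s _ => he s), intervalIntegral.integral_neg] at h
      linarith
    · have h := hKey 0
      simpa using h
  have hb2 : |(σ b).2 - (σ a).2| ≤ R := by
    rw [← hFTC2, abs_le]
    constructor
    · have h := hKey (-(Real.pi/2))
      have he : ∀ s, Real.cos (ψ s - -(Real.pi/2)) = -Real.sin (ψ s) := by
        intro s
        rw [sub_neg_eq_add, Real.cos_add_pi_div_two]
      rw [intervalIntegral.integral_congr (g := fun s => -Real.sin (ψ s))
        (fun s _ => he s), intervalIntegral.integral_neg] at h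
      linarith
    · have h := hKey (Real.pi/2)
      have he : ∀ s, Real.cos (ψ s - Real.pi/2) = Real.sin (ψ s) :=
        fun s => Real.cos_sub_pi_div_two _
      rwa [intervalIntegral.integral_congr (g := fun s => Real.sin (ψ s))
        (fun s _ => he s)] at h
  rw [Prod.dist_eq]
  apply max_le
  · rw [Real.dist_eq, abs_sub_comm]; exact hb1
  · rw [Real.dist_eq, abs_sub_comm]; exact hb2
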